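/- Reduction to the model system (derivation of the main model equation, Section 2.2 of the paper, single-mode version): for every even integer n ≥ 4 there exist a real constant q' ≥ 1, a constant F ≥ 0, and continuous functions f₁, f₂, f₃ : [0,∞) → ℝ with |fᵢ(τ)| ≤ F for all τ ≥ 0, depending only on n, such that for every λ ≥ 0 and every (n/2+2)-times continuously differentiable function ψ : (0,∞) → ℝ satisfying the mode-λ self-similar wave ODE on (0,∞), the functions a(τ) := ψ⁽ⁿᐟ²⁾(τ²) and c(τ) := ψ⁽ⁿᐟ²⁻¹⁾(τ²) satisfy, for all τ > 0: a''(τ) + τ⁻¹·a'(τ) + 4q'·a(τ) + 4λ²·(τ²+1)⁻²·a(τ) = f₁(τ)·τ·a'(τ) + f₂(τ)·τ²·a(τ) + f₃(τ)·c(τ), and c'(τ) = 2τ·a(τ). -/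

import Mathlib

open Set Filter

lemma iterDerivWithin_eq_iterDeriv {ψ : ℝ → ℝ} {s : Set ℝ} (hs : IsOpen s) {j : ℕ} {x : ℝ}
    (hx : x ∈ s) : iteratedDerivWithin j ψ s x = iteratedDeriv j ψ x := by
  rw [iteratedDerivWithin_eq_iteratedFDerivWithin, iteratedDeriv_eq_iteratedFDeriv,
    iteratedFDerivWithin_of_isOpen j hs hx]

lemma hasDerivAt_iterDeriv {ψ : ℝ → ℝ} {N : ℕ}
    (h : ContDiffOn ℝ (N : ℕ∞) ψ (Ioi 0)) {j : ℕ} (hj : j + 1 ≤ N) {v : ℝ} (hv : 0 < v) :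
    HasDerivAt (iteratedDeriv j ψ) (iteratedDeriv (j + 1) ψ v) v := by
  have hs : IsOpen (Ioi (0:ℝ)) := isOpen_Ioi
  have hdo : DifferentiableOn ℝ (iteratedDerivWithin j ψ (Ioi 0)) (Ioi 0) :=
    h.differentiableOn_iteratedDerivWithin (by exact_mod_cast hj) hs.uniqueDiffOn
  have h1 : DifferentiableAt ℝ (iteratedDerivWithin j ψ (Ioi 0)) v :=
    (hdo v hv).differentiableAt (hs.mem_nhds hv)
  have heq : iteratedDerivWithin j ψ (Ioi 0) =ᶠ[nhds v] iteratedDeriv j ψ :=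
    eventually_of_mem (hs.mem_nhds hv) fun x hx => iterDerivWithin_eq_iterDeriv hs hx
  have h2 : DifferentiableAt ℝ (iteratedDeriv j ψ) v := h1.congr_of_eventuallyEq heq.symm
  rw [iteratedDeriv_succ]
  exact h2.hasDerivAt

lemma hasDerivAt_quad (a b c v : ℝ) :
    HasDerivAt (fun x : ℝ => a * x ^ 2 + b * x + c) (2 * a * v + b) v := by
  have h := (((hasDerivAt_pow 2 v).const_mul a).add ((hasDerivAt_id v).const_mul b)).add_const c
  refine h.congr_deriv ?_
  push_cast; ring

lemma hasDerivAt_P (v : ℝ) :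
    HasDerivAt (fun x : ℝ => x * (x + 1) ^ 2) (3 * v ^ 2 + 4 * v + 1) v := by
  have h := (hasDerivAt_id v).mul (((hasDerivAt_id v).add_const 1).pow 2)
  refine h.congr_deriv ?_
  simp only [id, Pi.pow_apply]; push_cast; ring

/-- The ODE differentiated `k+1` times. -/
lemma key_ode_iter (m : ℕ) (lam : ℝ) (ψ : ℝ → ℝ)
    (hD : ∀ j, j + 1 ≤ m + 2 → ∀ v > (0:ℝ),
      HasDerivAt (iteratedDeriv j ψ) (iteratedDeriv (j + 1) ψ v) v)
    (hode : ∀ v > (0:ℝ),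
      v * (v + 1) ^ 2 * iteratedDeriv 2 ψ v
        + (((m:ℝ) + 1) * v ^ 2 + 2 * v + (1 - (m:ℝ))) * iteratedDeriv 1 ψ v
        + lam ^ 2 * iteratedDeriv 0 ψ v = 0) :
    ∀ k, k + 1 ≤ m → ∀ v > (0:ℝ),
      v * (v + 1) ^ 2 * iteratedDeriv (k + 3) ψ v
        + ((3 * ((k:ℝ) + 1) + 1 + (m:ℝ)) * v ^ 2 + (4 * ((k:ℝ) + 1) + 2) * v
            + (((k:ℝ) + 1) + 1 - (m:ℝ))) * iteratedDeriv (k + 2) ψ v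
        + ((3 * ((k:ℝ) + 1) ^ 2 + (2 * (m:ℝ) - 1) * ((k:ℝ) + 1)) * v
            + 2 * ((k:ℝ) + 1) ^ 2 + lam ^ 2) * iteratedDeriv (k + 1) ψ v
        + ((k:ℝ) + 1) * (k:ℝ) * ((k:ℝ) + (m:ℝ)) * iteratedDeriv k ψ v = 0 := by
  intro k
  induction k with
  | zero =>
    intro hk v hv
    have hG := ((hasDerivAt_P v).mul (hD 2 (by omega) v hv)).add
        (((hasDerivAt_quad ((m:ℝ)+1) 2 (1-(m:ℝ)) v).mul (hD 1 (by omega) v hv)).add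
          ((hasDerivAt_const v (lam^2)).mul (hD 0 (by omega) v hv)))
    have h0 := hG.unique ((hasDerivAt_const v (0:ℝ)).congr_of_eventuallyEq
        (eventually_of_mem (isOpen_Ioi.mem_nhds hv) fun x hx => by
          simp only [Pi.add_apply, Pi.mul_apply]
          linear_combination hode x hx))
    push_cast
    linear_combination h0
  | succ k ih =>
    intro hk v hv
    have ihk := ih (by omega)
    have hG := ((hasDerivAt_P v).mul (hD (k+3) (by omega) v hv)).add
        (((hasDerivAt_quad (3*((k:ℝ)+1)+1+(m:ℝ)) (4*((k:ℝ)+1)+2) (((k:ℝ)+1)+1-(m:ℝ)) v).mul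
            (hD (k+2) (by omega) v hv)).add
          (((hasDerivAt_quad 0 (3*((k:ℝ)+1)^2+(2*(m:ℝ)-1)*((k:ℝ)+1))
                (2*((k:ℝ)+1)^2+lam^2) v).mul (hD (k+1) (by omega) v hv)).add
            ((hasDerivAt_const v (((k:ℝ)+1)*(k:ℝ)*((k:ℝ)+(m:ℝ)))).mul
              (hD k (by omega) v hv))))
    have h0 := hG.unique ((hasDerivAt_const v (0:ℝ)).congr_of_eventuallyEq
        (eventually_of_mem (isOpen_Ioi.mem_nhds hv) fun x hx => by
          simp only [Pi.add_apply, Pi.mul_apply]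
          linear_combination ihk x hx))
    simp only [show k + 1 + 3 = k + 4 from rfl, show k + 1 + 2 = k + 3 from rfl,
      show k + 1 + 1 = k + 2 from rfl] at h0 ⊢
    push_cast
    linear_combination h0


/-- `ψ` solves the mode-`lam` self-similar wave ODE on `(0,∞)`:
`v(v+1)²·ψ'' + (1 − n/2)·(v+1)²·ψ' + n·v·(v+1)·ψ' + λ²·ψ = 0`. -/
def SolvesWaveODE (n : ℕ) (lam : ℝ) (ψ : ℝ → ℝ) : Prop :=
  ∀ v > (0:ℝ),
    v * (v + 1) ^ 2 * iteratedDeriv 2 ψ v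
      + (1 - (n : ℝ) / 2) * (v + 1) ^ 2 * deriv ψ v
      + (n : ℝ) * v * (v + 1) * deriv ψ v
      + lam ^ 2 * ψ v = 0

set_option maxHeartbeats 1000000 in
/-- Reduction to the model system (derivation of the main model equation,
Section 2.2 of the paper, single-mode version). -/
theorem reduction_to_model_system (n : ℕ) (hn : Even n) (hn4 : 4 ≤ n) :
    ∃ q' F : ℝ, 1 ≤ q' ∧ 0 ≤ F ∧ ∃ f₁ f₂ f₃ : ℝ → ℝ,
      ContinuousOn f₁ (Ici 0) ∧ ContinuousOn f₂ (Ici 0) ∧ ContinuousOn f₃ (Ici 0) ∧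
      (∀ τ ≥ (0:ℝ), |f₁ τ| ≤ F) ∧ (∀ τ ≥ (0:ℝ), |f₂ τ| ≤ F) ∧ (∀ τ ≥ (0:ℝ), |f₃ τ| ≤ F) ∧
      ∀ lam : ℝ, 0 ≤ lam → ∀ ψ : ℝ → ℝ,
        ContDiffOn ℝ ((n / 2 + 2 : ℕ) : ℕ∞) ψ (Ioi 0) →
        SolvesWaveODE n lam ψ →
        (∀ τ > (0:ℝ),
          deriv (deriv (fun s => iteratedDeriv (n / 2) ψ (s ^ 2))) τ
            + τ⁻¹ * deriv (fun s => iteratedDeriv (n / 2) ψ (s ^ 2)) τ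
            + 4 * q' * iteratedDeriv (n / 2) ψ (τ ^ 2)
            + 4 * lam ^ 2 * ((τ ^ 2 + 1) ^ 2)⁻¹ * iteratedDeriv (n / 2) ψ (τ ^ 2)
          = f₁ τ * τ * deriv (fun s => iteratedDeriv (n / 2) ψ (s ^ 2)) τ
            + f₂ τ * τ ^ 2 * iteratedDeriv (n / 2) ψ (τ ^ 2)
            + f₃ τ * iteratedDeriv (n / 2 - 1) ψ (τ ^ 2)) ∧
        (∀ τ > (0:ℝ),
          deriv (fun s => iteratedDeriv (n / 2 - 1) ψ (s ^ 2)) τ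
            = 2 * τ * iteratedDeriv (n / 2) ψ (τ ^ 2)) := by

  obtain ⟨p, hp⟩ : ∃ p, n / 2 = p + 2 := ⟨n / 2 - 2, by omega⟩
  have hn2 : n = 2 * p + 4 := by obtain ⟨t, ht⟩ := hn; omega
  set M : ℝ := (p : ℝ) + 2 with hM
  have hp0 : (0:ℝ) ≤ (p:ℝ) := Nat.cast_nonneg p
  have hM2 : (2:ℝ) ≤ M := by rw [hM]; linarith
  have hM0 : (0:ℝ) < M := by linarith
  have hF0 : (0:ℝ) ≤ 30*M^3 := by positivity
  have c1 : (0:ℝ) ≤ 30*M^3 - 8*M := by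
    nlinarith [mul_nonneg hM0.le (show (0:ℝ) ≤ 30*M^2 - 8 by nlinarith)]
  have c2 : (0:ℝ) ≤ 60*M^3 - 8*M^2 := by
    nlinarith [mul_nonneg (mul_nonneg hM0.le hM0.le) (show (0:ℝ) ≤ 60*M - 8 by linarith)]
  have c3 : (0:ℝ) ≤ 30*M^3 + 4*M^2 - 4*M := by
    nlinarith [mul_nonneg hM0.le (show (0:ℝ) ≤ 30*M^2 + 4*M - 4 by nlinarith)]
  have c4 : (0:ℝ) ≤ 30*M^3 - 4*M^2 + 4*M := by
    nlinarith [mul_nonneg hM0.le (show (0:ℝ) ≤ 30*M^2 - 4*M + 4 by nlinarith)]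
  have c5 : (0:ℝ) ≤ 30*M^3 - (8*M^3 - 12*M^2 + 4*M) := by
    nlinarith [mul_nonneg hM0.le (show (0:ℝ) ≤ 22*M^2 + 12*M - 4 by nlinarith)]
  refine ⟨2*M^2, 30*M^3, by nlinarith, hF0,
    fun τ => -(8*M)/(τ^2+1),
    fun τ => (8*M^2*τ^2 - 4*M^2 + 4*M)/(τ^2+1)^2,
    fun τ => -(4*M*(M-1)*(2*M-1))/(τ^2+1)^2,
    ?_, ?_, ?_, ?_, ?_, ?_, ?_⟩
  · exact (continuous_const.div (by continuity) (fun x => by positivity)).continuousOn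
  · exact ((by continuity : Continuous fun τ:ℝ => 8*M^2*τ^2 - 4*M^2 + 4*M).div
      (by continuity) (fun x => by positivity)).continuousOn
  · exact (continuous_const.div (by continuity) (fun x => by positivity)).continuousOn
  · intro τ hτ
    have ht : (0:ℝ) ≤ τ^2 := sq_nonneg τ
    have h1 : (0:ℝ) < τ^2+1 := by positivity
    rw [abs_div, abs_of_pos h1, div_le_iff₀ h1]
    rcases abs_cases (-(8*M)) with ⟨h,_⟩|⟨h,_⟩ <;> rw [h] <;>
      nlinarith [mul_nonneg hF0 ht]
  · intro τ hτ
    have ht : (0:ℝ) ≤ τ^2 := sq_nonneg τ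
    have h1 : (0:ℝ) < (τ^2+1)^2 := by positivity
    rw [abs_div, abs_of_pos h1, div_le_iff₀ h1]
    rcases abs_cases (8*M^2*τ^2 - 4*M^2 + 4*M) with ⟨h,_⟩|⟨h,_⟩ <;> rw [h] <;>
      nlinarith [mul_nonneg hF0 (mul_nonneg ht ht), mul_nonneg c2 ht, c3, c4,
        mul_nonneg (mul_nonneg (mul_nonneg hM0.le hM0.le) hM0.le) ht,
        mul_nonneg (mul_nonneg hM0.le hM0.le) ht]
  · intro τ hτ
    have ht : (0:ℝ) ≤ τ^2 := sq_nonneg τ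
    have h1 : (0:ℝ) < (τ^2+1)^2 := by positivity
    rw [abs_div, abs_of_pos h1, div_le_iff₀ h1]
    rcases abs_cases (-(4*M*(M-1)*(2*M-1))) with ⟨h,_⟩|⟨h,_⟩ <;> rw [h] <;>
      nlinarith [mul_nonneg hF0 (mul_nonneg ht ht), mul_nonneg hF0 ht, c5,
        mul_nonneg (mul_nonneg (mul_nonneg hM0.le hM0.le) hM0.le) ht]
  intro lam hlam ψ hψ hode
  simp only [hp] at hψ ⊢
  simp only [show p + 2 - 1 = p + 1 from rfl]
  have hD : ∀ j, j + 1 ≤ (p + 2) + 2 → ∀ v > (0:ℝ),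
      HasDerivAt (iteratedDeriv j ψ) (iteratedDeriv (j + 1) ψ v) v :=
    fun j hj v hv => hasDerivAt_iterDeriv hψ hj hv
  have hcast : (n:ℝ) = 2 * M := by rw [hM, hn2]; push_cast; ring
  have hode' : ∀ v > (0:ℝ),
      v * (v + 1) ^ 2 * iteratedDeriv 2 ψ v
        + ((((p + 2 : ℕ) : ℝ) + 1) * v ^ 2 + 2 * v + (1 - ((p + 2 : ℕ) : ℝ)))
            * iteratedDeriv 1 ψ v
        + lam ^ 2 * iteratedDeriv 0 ψ v = 0 := by
    intro v hv
    have h := hode v hv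
    simp only [iteratedDeriv_one, iteratedDeriv_zero]
    push_cast
    linear_combination h + (((v+1)^2/2 - v*(v+1)) * deriv ψ v) * hcast
  have hkey := key_ode_iter (p+2) lam ψ hD hode' (p+1) (by omega)
  constructor
  · intro τ hτ
    have hτ0 : τ ≠ 0 := ne_of_gt hτ
    have hv : (0:ℝ) < τ^2 := by positivity
    have hsq : ∀ s : ℝ, HasDerivAt (fun x:ℝ => x^2) (2*s) s := fun s => by
      simpa using hasDerivAt_pow 2 s
    have hA : ∀ s : ℝ, 0 < s → HasDerivAt (fun s => iteratedDeriv (p+2) ψ (s^2))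
        (iteratedDeriv (p+3) ψ (s^2) * (2*s)) s := fun s hs =>
      (hD (p+2) (by omega) (s^2) (by positivity)).comp (h := fun x : ℝ => x ^ 2) s (hsq s)
    have hderiv1 : deriv (fun s => iteratedDeriv (p+2) ψ (s^2)) τ
        = iteratedDeriv (p+3) ψ (τ^2) * (2*τ) := (hA τ hτ).deriv
    have heq : deriv (fun s => iteratedDeriv (p+2) ψ (s^2))
        =ᶠ[nhds τ] fun s => iteratedDeriv (p+3) ψ (s^2) * (2*s) :=
      eventually_of_mem (isOpen_Ioi.mem_nhds hτ) fun s hs => (hA s hs).deriv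
    have hB : HasDerivAt (fun s => iteratedDeriv (p+3) ψ (s^2) * (2*s))
        ((iteratedDeriv (p+4) ψ (τ^2) * (2*τ)) * (2*τ) + iteratedDeriv (p+3) ψ (τ^2) * 2) τ := by
      have hA3 : ∀ s : ℝ, 0 < s → HasDerivAt (fun s => iteratedDeriv (p+3) ψ (s^2))
          (iteratedDeriv (p+4) ψ (s^2) * (2*s)) s := fun s hs =>
        (hD (p+3) (by omega) (s^2) (by positivity)).comp (h := fun x : ℝ => x ^ 2) s (hsq s)
      have h2 := hA3 τ hτ
      have h3 : HasDerivAt (fun s:ℝ => 2*s) 2 τ := by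
        simpa using (hasDerivAt_id τ).const_mul 2
      exact h2.mul h3
    have hderiv2 : deriv (deriv (fun s => iteratedDeriv (p+2) ψ (s^2))) τ
        = (iteratedDeriv (p+4) ψ (τ^2) * (2*τ)) * (2*τ) + iteratedDeriv (p+3) ψ (τ^2) * 2 := by
      rw [heq.deriv_eq]; exact hB.deriv
    rw [hderiv1, hderiv2, hM]
    have hk := hkey (τ^2) hv
    simp only [show p+1+3 = p+4 from rfl, show p+1+2 = p+3 from rfl,
      show p+1+1 = p+2 from rfl] at hk
    push_cast at hk
    have hd1 : τ^2 + 1 ≠ 0 := by positivity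
    field_simp
    linear_combination 4 * hk
  · intro τ hτ
    have h1 : HasDerivAt (fun x:ℝ => x^2) (2*τ) τ := by simpa using hasDerivAt_pow 2 τ
    have h2 : HasDerivAt (fun s => iteratedDeriv (p+1) ψ (s^2))
        (iteratedDeriv (p+2) ψ (τ^2) * (2*τ)) τ :=
      (hD (p+1) (by omega) (τ^2) (by positivity)).comp (h := fun x : ℝ => x ^ 2) τ h1
    rw [h2.deriv]; ring
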